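/- Let C be a category with all morphisms monic. Any two ind-objects of C that are both universal and homogeneous (equivalently, universal and f-injective) are isomorphic as ind-objects. -/

import Mathlib

open CategoryTheory

universe u v

/-- An ind-object of a category `C`: a sequential diagram `X₁ → X₂ → ⋯` in `C`. -/
structure IndObject (C : Type u) [Category.{v} C] where
  obj : ℕ → C
  map : ∀ n : ℕ, obj n ⟶ obj (n + 1)

namespace IndObject

variable {C : Type u} [Category.{v} C]

/-- The transition morphism `obj n ⟶ obj m` of an ind-object, for `n ≤ m`. -/
def trans (Ω : IndObject C) : ∀ {n m : ℕ}, n ≤ m → (Ω.obj n ⟶ Ω.obj m) :=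
  fun {n m} h =>
    Nat.leRecOn (C := fun m => Ω.obj n ⟶ Ω.obj m) h (fun {l} g => g ≫ Ω.map l) (𝟙 _)

/-- An ind-object is universal if every object of `C` embeds into it. -/
def Universal (Ω : IndObject C) : Prop :=
  ∀ X : C, ∃ n : ℕ, Nonempty (X ⟶ Ω.obj n)

/-- An ind-object is f-injective if every embedding of an object of `C` into it extends
along any morphism of `C`. -/
def FInjective (Ω : IndObject C) : Prop :=
  ∀ ⦃X Y : C⦄ (α : X ⟶ Y) (n : ℕ) (γ : X ⟶ Ω.obj n),
    ∃ (m : ℕ) (h : n ≤ m) (β : Y ⟶ Ω.obj m), α ≫ β = γ ≫ Ω.trans h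

end IndObject


/-- An isomorphism of ind-objects: compatible families of morphisms in both directions
whose composites are the transition maps. -/
structure IndIso {C : Type u} [Category.{v} C] (Ω Ω' : IndObject C) where
  a : ℕ → ℕ
  b : ℕ → ℕ
  amono : Monotone a
  bmono : Monotone b
  fwd : ∀ n : ℕ, Ω.obj n ⟶ Ω'.obj (a n)
  bwd : ∀ n : ℕ, Ω'.obj n ⟶ Ω.obj (b n)
  fwd_comm : ∀ {n m : ℕ} (h : n ≤ m), Ω.trans h ≫ fwd m = fwd n ≫ Ω'.trans (amono h)
  bwd_comm : ∀ {n m : ℕ} (h : n ≤ m), Ω'.trans h ≫ bwd m = bwd n ≫ Ω.trans (bmono h)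
  le_ba : ∀ n : ℕ, n ≤ b (a n)
  le_ab : ∀ n : ℕ, n ≤ a (b n)
  fwd_bwd : ∀ n : ℕ, fwd n ≫ bwd (a n) = Ω.trans (le_ba n)
  bwd_fwd : ∀ n : ℕ, bwd n ≫ fwd (b n) = Ω'.trans (le_ab n)

namespace IndObject

variable {C : Type u} [Category.{v} C]

theorem trans_self (Ω : IndObject C) (n : ℕ) (h : n ≤ n) : Ω.trans h = 𝟙 _ :=
  Nat.leRecOn_self _

theorem trans_succ' (Ω : IndObject C) {n m : ℕ} (h : n ≤ m) (h2 : n ≤ m + 1) :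
    Ω.trans h2 = Ω.trans h ≫ Ω.map m :=
  Nat.leRecOn_succ h _

theorem trans_trans (Ω : IndObject C) {n m k : ℕ} (h1 : n ≤ m) (h2 : m ≤ k) :
    Ω.trans h1 ≫ Ω.trans h2 = Ω.trans (h1.trans h2) := by
  induction k, h2 using Nat.le_induction with
  | base => rw [trans_self]; simp
  | succ k hk ih =>
    rw [trans_succ' Ω hk, trans_succ' Ω (h1.trans hk), ← Category.assoc, ih]

/-- A stage of the back-and-forth construction. -/
structure Stage (Ω Ω' : IndObject C) where
  n : ℕ
  m : ℕ
  f : Ω.obj n ⟶ Ω'.obj m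

/-- A link between two consecutive stages. -/
structure Link (Ω Ω' : IndObject C) (N : ℕ) (s t : Stage Ω Ω') where
  hn : s.n ≤ t.n
  hm : s.m ≤ t.m
  hNn : N ≤ t.n
  hNm : N ≤ t.m
  g : Ω'.obj s.m ⟶ Ω.obj t.n
  fg : s.f ≫ g = Ω.trans hn
  gf : g ≫ t.f = Ω'.trans hm

variable (Ω Ω' : IndObject C)

theorem exists_link (hfinj : Ω.FInjective) (hfinj' : Ω'.FInjective)
    (N : ℕ) (s : Stage Ω Ω') : ∃ t, Nonempty (Link Ω Ω' N s t) := by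
  obtain ⟨n₀, h₀, g₀, hg₀⟩ := hfinj s.f s.n (𝟙 _)
  set n' := max n₀ N with hn'
  have hn₀ : n₀ ≤ n' := le_max_left _ _
  set g : Ω'.obj s.m ⟶ Ω.obj n' := g₀ ≫ Ω.trans hn₀ with hg
  have hfg : s.f ≫ g = Ω.trans (h₀.trans hn₀) := by
    rw [hg, ← Category.assoc, hg₀, Category.id_comp, trans_trans]
  obtain ⟨m₀, h₁, f₀, hf₀⟩ := hfinj' g s.m (𝟙 _)
  set m' := max m₀ N with hm'
  have hm₀ : m₀ ≤ m' := le_max_left _ _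
  refine ⟨⟨n', m', f₀ ≫ Ω'.trans hm₀⟩, ⟨⟨h₀.trans hn₀, h₁.trans hm₀,
    le_max_right _ _, le_max_right _ _, g, hfg, ?_⟩⟩⟩
  show g ≫ f₀ ≫ Ω'.trans hm₀ = _
  rw [← Category.assoc, hf₀, Category.id_comp, trans_trans]

variable (hfinj : Ω.FInjective) (hfinj' : Ω'.FInjective) (s₀ : Stage Ω Ω')

/-- The back-and-forth chain of stages. -/
noncomputable def chain : ℕ → Stage Ω Ω' := fun k =>
  Nat.rec s₀ (fun k s => (exists_link Ω Ω' hfinj hfinj' (k + 1) s).choose) k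

/-- The link between consecutive stages of the chain. -/
noncomputable def link (k : ℕ) :
    Link Ω Ω' (k + 1) (chain Ω Ω' hfinj hfinj' s₀ k) (chain Ω Ω' hfinj hfinj' s₀ (k + 1)) :=
  (exists_link Ω Ω' hfinj hfinj' (k + 1) (chain Ω Ω' hfinj hfinj' s₀ k)).choose_spec.some

theorem nmono : Monotone fun k => (chain Ω Ω' hfinj hfinj' s₀ k).n :=
  monotone_nat_of_le_succ fun k => (link Ω Ω' hfinj hfinj' s₀ k).hn

theorem mmono : Monotone fun k => (chain Ω Ω' hfinj hfinj' s₀ k).m :=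
  monotone_nat_of_le_succ fun k => (link Ω Ω' hfinj hfinj' s₀ k).hm

theorem le_nk (k : ℕ) : k + 1 ≤ (chain Ω Ω' hfinj hfinj' s₀ (k + 1)).n :=
  (link Ω Ω' hfinj hfinj' s₀ k).hNn

theorem le_mk (k : ℕ) : k ≤ (chain Ω Ω' hfinj hfinj' s₀ k).m := by
  cases k with
  | zero => exact Nat.zero_le _
  | succ k => exact (link Ω Ω' hfinj hfinj' s₀ k).hNm

/-- Compatibility of the forward maps along the chain. -/
theorem f_compat {k l : ℕ} (h : k ≤ l)
    (hn : (chain Ω Ω' hfinj hfinj' s₀ k).n ≤ (chain Ω Ω' hfinj hfinj' s₀ l).n)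
    (hm : (chain Ω Ω' hfinj hfinj' s₀ k).m ≤ (chain Ω Ω' hfinj hfinj' s₀ l).m) :
    Ω.trans hn ≫ (chain Ω Ω' hfinj hfinj' s₀ l).f
      = (chain Ω Ω' hfinj hfinj' s₀ k).f ≫ Ω'.trans hm := by
  induction l, h using Nat.le_induction with
  | base => rw [trans_self, trans_self]; simp
  | succ l hl ih =>
    have hn1 := nmono Ω Ω' hfinj hfinj' s₀ hl
    have hm1 := mmono Ω Ω' hfinj hfinj' s₀ hl
    have L := link Ω Ω' hfinj hfinj' s₀ l
    have step : Ω.trans L.hn ≫ (chain Ω Ω' hfinj hfinj' s₀ (l + 1)).f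
        = (chain Ω Ω' hfinj hfinj' s₀ l).f ≫ Ω'.trans L.hm := by
      rw [← L.fg, Category.assoc, L.gf]
    calc Ω.trans hn ≫ (chain Ω Ω' hfinj hfinj' s₀ (l + 1)).f
        = Ω.trans (hn1.trans L.hn) ≫ (chain Ω Ω' hfinj hfinj' s₀ (l + 1)).f := rfl
      _ = (Ω.trans hn1 ≫ Ω.trans L.hn) ≫ (chain Ω Ω' hfinj hfinj' s₀ (l + 1)).f := by
          rw [trans_trans]
      _ = Ω.trans hn1 ≫ (chain Ω Ω' hfinj hfinj' s₀ l).f ≫ Ω'.trans L.hm := by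
          rw [Category.assoc, step]
      _ = ((chain Ω Ω' hfinj hfinj' s₀ k).f ≫ Ω'.trans hm1) ≫ Ω'.trans L.hm := by
          rw [← Category.assoc, ih hn1 hm1]
      _ = _ := by rw [Category.assoc, trans_trans]

/-- Compatibility of the backward maps along the chain (uses that all maps are monic). -/
theorem g_compat (hmono : ∀ {X Y : C} (f : X ⟶ Y), Mono f) {k l : ℕ} (h : k ≤ l)
    (hm : (chain Ω Ω' hfinj hfinj' s₀ k).m ≤ (chain Ω Ω' hfinj hfinj' s₀ l).m)
    (hn : (chain Ω Ω' hfinj hfinj' s₀ (k + 1)).n ≤ (chain Ω Ω' hfinj hfinj' s₀ (l + 1)).n) :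
    Ω'.trans hm ≫ (link Ω Ω' hfinj hfinj' s₀ l).g
      = (link Ω Ω' hfinj hfinj' s₀ k).g ≫ Ω.trans hn := by
  have := hmono (chain Ω Ω' hfinj hfinj' s₀ (l + 1)).f
  apply (cancel_mono (chain Ω Ω' hfinj hfinj' s₀ (l + 1)).f).mp
  have hm1 := mmono Ω Ω' hfinj hfinj' s₀ (Nat.succ_le_succ h)
  rw [Category.assoc, (link Ω Ω' hfinj hfinj' s₀ l).gf, trans_trans,
    Category.assoc, f_compat Ω Ω' hfinj hfinj' s₀ (Nat.succ_le_succ h) hn hm1,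
    ← Category.assoc, (link Ω Ω' hfinj hfinj' s₀ k).gf, trans_trans]

end IndObject

/-- any two universal f-injective (equivalently, universal homogeneous)
ind-objects of a category with all morphisms monic are isomorphic as ind-objects. -/
theorem stmt_12 (C : Type u) [Category.{v} C]
    (hmono : ∀ {X Y : C} (f : X ⟶ Y), Mono f)
    (Ω Ω' : IndObject C)
    (huniv : Ω.Universal) (hfinj : Ω.FInjective)
    (huniv' : Ω'.Universal) (hfinj' : Ω'.FInjective) :
    Nonempty (IndIso Ω Ω') := by
  classical
  obtain ⟨m₀, ⟨f₀⟩⟩ := huniv' (Ω.obj 0)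
  set s₀ : IndObject.Stage Ω Ω' := ⟨0, m₀, f₀⟩ with hs₀
  set ch := IndObject.chain Ω Ω' hfinj hfinj' s₀ with hch
  set lk := IndObject.link Ω Ω' hfinj hfinj' s₀ with hlk
  have nmono := IndObject.nmono Ω Ω' hfinj hfinj' s₀
  have mmono := IndObject.mmono Ω Ω' hfinj hfinj' s₀
  have le_nk : ∀ k, k ≤ (ch k).n := by
    intro k
    cases k with
    | zero => exact Nat.zero_le _
    | succ k => exact IndObject.le_nk Ω Ω' hfinj hfinj' s₀ k
  have le_mk : ∀ k, k ≤ (ch k).m := IndObject.le_mk Ω Ω' hfinj hfinj' s₀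
  -- data of the iso
  refine ⟨⟨fun n => (ch n).m, fun n => (ch (n + 1)).n,
    fun n m h => mmono h, fun n m h => nmono (Nat.succ_le_succ h),
    fun n => Ω.trans (le_nk n) ≫ (ch n).f,
    fun n => Ω'.trans (le_mk n) ≫ (lk n).g,
    ?_, ?_, ?_, ?_, ?_, ?_⟩⟩
  · -- fwd_comm
    intro n m h
    simp only [Category.assoc]
    rw [← IndObject.f_compat Ω Ω' hfinj hfinj' s₀ h (nmono h) (mmono h)]
    simp only [← Category.assoc, IndObject.trans_trans]
    rfl
  · -- bwd_comm
    intro n m h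
    simp only [Category.assoc]
    rw [← IndObject.g_compat Ω Ω' hfinj hfinj' s₀ hmono h (mmono h)
        (nmono (Nat.succ_le_succ h))]
    simp only [← Category.assoc, IndObject.trans_trans]
    rfl
  · -- le_ba
    intro n
    exact ((le_mk n).trans (Nat.le_succ _)).trans (le_nk ((ch n).m + 1))
  · -- le_ab
    intro n
    exact (Nat.le_succ n).trans ((le_nk (n + 1)).trans (le_mk (ch (n + 1)).n))
  · -- fwd_bwd
    intro n
    have h1 : n ≤ (ch n).m := le_mk n
    have hn1 : (ch n).n ≤ (ch ((ch n).m)).n := nmono h1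
    have hm1 : (ch n).m ≤ (ch ((ch n).m)).m := mmono h1
    simp only [Category.assoc]
    rw [← Category.assoc ((ch n).f),
      ← IndObject.f_compat Ω Ω' hfinj hfinj' s₀ h1 hn1 hm1]
    simp only [Category.assoc]
    rw [(lk ((ch n).m)).fg]
    simp only [IndObject.trans_trans]
  · -- bwd_fwd
    intro n
    set l := (ch (n + 1)).n with hl
    have h1 : n + 1 ≤ l := le_nk (n + 1)
    have hn1 : (ch (n + 1)).n ≤ (ch l).n := nmono h1
    have hm1 : (ch (n + 1)).m ≤ (ch l).m := mmono h1
    simp only [Category.assoc]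
    rw [show Ω.trans (le_nk l) = Ω.trans hn1 from rfl,
      IndObject.f_compat Ω Ω' hfinj hfinj' s₀ h1 hn1 hm1,
      ← Category.assoc ((lk n).g), (lk n).gf]
    simp only [IndObject.trans_trans]
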